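/- arXiv:2605.09386 — 2 statements merged into one kernel-verified Lean document; each statement's English description precedes it below -/
import Mathlib

section
/- (Converse of the constant-speed characterization) Let X be a finite type, p : ℝ → X → ℝ a categorical probability path on [0, κmax] with p κ x > 0 and continuously differentiable in κ, and κ : [0,1] → [0, κmax] a continuously differentiable monotone nondecreasing scheduler with κ(0) = 0, κ(1) = κmax. If the Fisher–Rao energy attains the lower bound, E[κ] = ∫₀¹ Σ_x (d/dt p(κ t) x)² / p(κ t) x dt = L² where L = ∫₀^{κmax} √(I(ξ)) dξ, then the Fisher–Rao speed is constant: √(Σ_{x ∈ X} (d/dt p(κ t) x)² / p(κ t) x) = L for every t ∈ [0,1]. -/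
open Set MeasureTheory intervalIntegral Filter Topology

lemma aux_deriv_nonneg {f : ℝ → ℝ} {a b d t : ℝ} (hab : a < b) (ht : t ∈ Set.Icc a b)
    (hm : MonotoneOn f (Set.Icc a b)) (hd : HasDerivWithinAt f d (Set.Icc a b) t) : 0 ≤ d := by
  rw [hasDerivWithinAt_iff_tendsto_slope] at hd
  have hslope : ∀ s ∈ Set.Icc a b \ {t}, 0 ≤ slope f t s := by
    rintro s ⟨hs, hst⟩
    have hst' : s ≠ t := hst
    rw [slope_def_field]
    rcases lt_or_gt_of_ne hst' with h | h
    · exact div_nonneg_of_nonpos (by simpa using hm hs ht h.le) (by linarith)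
    · exact div_nonneg (by simpa using hm ht hs h.le) (by linarith)
  haveI hne : (𝓝[Set.Icc a b \ {t}] t).NeBot := by
    rcases ht.2.lt_or_eq with h | h
    · haveI : (𝓝[Set.Ioc t b] t).NeBot := by
        rw [nhdsWithin_Ioc_eq_nhdsGT h]; infer_instance
      refine Filter.neBot_of_le (f := 𝓝[Set.Ioc t b] t) (nhdsWithin_mono _ ?_)
      rintro s ⟨h1, h2⟩; exact ⟨⟨ht.1.trans h1.le, h2⟩, ne_of_gt h1⟩
    · haveI : (𝓝[Set.Ico a b] t).NeBot := by
        rw [h, nhdsWithin_Ico_eq_nhdsLT hab]; infer_instance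
      refine Filter.neBot_of_le (f := 𝓝[Set.Ico a b] t) (nhdsWithin_mono _ ?_)
      rintro s ⟨h1, h2⟩
      exact ⟨⟨h1, h2.le⟩, by rw [h]; exact ne_of_lt h2⟩
  exact ge_of_tendsto hd (eventually_nhdsWithin_of_forall hslope)

lemma aux_eq_zero {q : ℝ → ℝ} (hc : ContinuousOn q (Set.Icc 0 1))
    (hnn : ∀ t ∈ Set.Icc (0:ℝ) 1, 0 ≤ q t)
    (hint : ∫ t in (0:ℝ)..1, q t = 0) : ∀ t ∈ Set.Icc (0:ℝ) 1, q t = 0 := by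
  have hInt : IntervalIntegrable q MeasureTheory.volume 0 1 :=
    (hc.mono (by rw [Set.uIcc_of_le zero_le_one])).intervalIntegrable
  have hae : q =ᵐ[MeasureTheory.volume.restrict (Set.Ioc 0 1)] 0 := by
    rw [← intervalIntegral.integral_eq_zero_iff_of_le_of_nonneg_ae zero_le_one ?_ hInt]
    · exact hint
    · filter_upwards [MeasureTheory.ae_restrict_mem measurableSet_Ioc] with t htt
      exact hnn t ⟨htt.1.le, htt.2⟩
  have hae' : q =ᵐ[MeasureTheory.volume.restrict (Set.Icc 0 1)] 0 := by
    rwa [MeasureTheory.Measure.restrict_congr_set MeasureTheory.Ioc_ae_eq_Icc] at hae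
  exact fun t htt => MeasureTheory.Measure.eqOn_Icc_of_ae_eq MeasureTheory.volume
    (by norm_num : (0:ℝ) ≠ 1) hae' hc continuousOn_const htt

/-- Converse of the constant-speed characterization: if the Fisher–Rao
energy attains the lower bound `L²`, then the Fisher–Rao speed is constantly `L`. -/
theorem fisher_rao_constant_speed_of_min_energy {X : Type*} [Fintype X] (κmax : ℝ)
    (p : ℝ → X → ℝ)
    (hpos : ∀ κ ∈ Set.Icc (0 : ℝ) κmax, ∀ x, 0 < p κ x)
    (hsum : ∀ κ ∈ Set.Icc (0 : ℝ) κmax, ∑ x, p κ x = 1)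
    (hdiff : ∀ x, ContDiffOn ℝ 1 (fun ξ => p ξ x) (Set.Icc 0 κmax))
    (κ : ℝ → ℝ)
    (hκdiff : ContDiffOn ℝ 1 κ (Set.Icc 0 1))
    (hκmono : MonotoneOn κ (Set.Icc 0 1))
    (hκmap : ∀ t ∈ Set.Icc (0 : ℝ) 1, κ t ∈ Set.Icc (0 : ℝ) κmax)
    (hκ0 : κ 0 = 0) (hκ1 : κ 1 = κmax)
    (L : ℝ)
    (hL : L = ∫ ξ in (0:ℝ)..κmax,
        Real.sqrt (∑ x, (derivWithin (fun η => p η x) (Set.Icc 0 κmax) ξ) ^ 2 / p ξ x))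
    (hE : ∫ t in (0:ℝ)..1,
        ∑ x, (derivWithin (fun s => p (κ s) x) (Set.Icc 0 1) t) ^ 2 / p (κ t) x = L ^ 2) :
    ∀ t ∈ Set.Icc (0 : ℝ) 1,
      Real.sqrt (∑ x, (derivWithin (fun s => p (κ s) x) (Set.Icc 0 1) t) ^ 2 / p (κ t) x)
        = L := by
  have hUD1 : UniqueDiffOn ℝ (Set.Icc (0:ℝ) 1) := uniqueDiffOn_Icc one_pos
  have hκmax0 : 0 ≤ κmax := by
    have h := (hκmap 0 ⟨le_rfl, zero_le_one⟩).2; rwa [hκ0] at h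
  rcases eq_or_lt_of_le hκmax0 with hκm | hκm
  · -- degenerate case κmax = 0
    intro t ht
    have hκz : ∀ s ∈ Set.Icc (0:ℝ) 1, κ s = 0 := by
      intro s hs
      have h := hκmap s hs
      rw [← hκm] at h
      exact le_antisymm h.2 h.1
    have hL0 : L = 0 := by rw [hL, ← hκm, intervalIntegral.integral_same]
    have hd0 : ∀ x : X, derivWithin (fun s => p (κ s) x) (Set.Icc 0 1) t = 0 := by
      intro x
      rw [derivWithin_congr (f := fun _ => p 0 x) (fun s hs => by simp [hκz s hs])
        (by simp [hκz t ht])]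
      exact (hasDerivWithinAt_const t _ (p 0 x)).derivWithin (hUD1 t ht)
    simp only [hd0]
    simp [hL0]
  -- main case 0 < κmax
  have hUD2 : UniqueDiffOn ℝ (Set.Icc (0:ℝ) κmax) := uniqueDiffOn_Icc hκm
  set g : X → ℝ → ℝ := fun x ξ => derivWithin (fun η => p η x) (Set.Icc 0 κmax) ξ with hgdef
  set G : ℝ → ℝ := fun ξ => Real.sqrt (∑ x, (g x ξ)^2 / p ξ x) with hGdef
  set κ' : ℝ → ℝ := fun t => derivWithin κ (Set.Icc 0 1) t with hκ'def
  have hκder : ∀ t ∈ Set.Icc (0:ℝ) 1, HasDerivWithinAt κ (κ' t) (Set.Icc 0 1) t := fun t ht =>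
    ((hκdiff.differentiableOn one_ne_zero) t ht).hasDerivWithinAt
  -- chain rule
  have hchain : ∀ t ∈ Set.Icc (0:ℝ) 1, ∀ x : X,
      derivWithin (fun s => p (κ s) x) (Set.Icc 0 1) t = g x (κ t) * κ' t := by
    intro t ht x
    have hpd : DifferentiableWithinAt ℝ (fun η => p η x) (Set.Icc 0 κmax) (κ t) :=
      ((hdiff x).differentiableOn one_ne_zero) (κ t) (hκmap t ht)
    have hc := HasDerivWithinAt.comp t hpd.hasDerivWithinAt (hκder t ht)
      (fun s hs => hκmap s hs)
    exact hc.derivWithin (hUD1 t ht)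
  have hκ'nn : ∀ t ∈ Set.Icc (0:ℝ) 1, 0 ≤ κ' t := fun t ht =>
    aux_deriv_nonneg one_pos ht hκmono (hκder t ht)
  have hInn : ∀ ξ ∈ Set.Icc (0:ℝ) κmax, 0 ≤ ∑ x, (g x ξ)^2 / p ξ x := fun ξ hξ =>
    Finset.sum_nonneg fun x _ => div_nonneg (sq_nonneg _) (hpos ξ hξ x).le
  set h : ℝ → ℝ := fun t => κ' t * G (κ t) with hhdef
  -- speed formula
  have hq : ∀ t ∈ Set.Icc (0:ℝ) 1,
      (∑ x, (derivWithin (fun s => p (κ s) x) (Set.Icc 0 1) t) ^ 2 / p (κ t) x)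
        = (κ' t)^2 * ∑ x, (g x (κ t))^2 / p (κ t) x := by
    intro t ht
    simp only [hchain t ht]
    rw [Finset.mul_sum]
    refine Finset.sum_congr rfl fun x _ => ?_
    ring
  have hsqrtq : ∀ t ∈ Set.Icc (0:ℝ) 1,
      Real.sqrt (∑ x, (derivWithin (fun s => p (κ s) x) (Set.Icc 0 1) t) ^ 2 / p (κ t) x)
        = h t := by
    intro t ht
    rw [hq t ht, Real.sqrt_mul (sq_nonneg _), Real.sqrt_sq (hκ'nn t ht)]
  -- continuity
  have hGcont : ContinuousOn G (Set.Icc 0 κmax) := by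
    apply ContinuousOn.sqrt
    apply continuousOn_finset_sum
    intro x _
    exact (((hdiff x).continuousOn_derivWithin hUD2 le_rfl).pow 2).div
      (hdiff x).continuousOn (fun ξ hξ => (hpos ξ hξ x).ne')
  have hκ'cont : ContinuousOn κ' (Set.Icc 0 1) :=
    hκdiff.continuousOn_derivWithin hUD1 le_rfl
  have hhcont : ContinuousOn h (Set.Icc 0 1) :=
    hκ'cont.mul (hGcont.comp hκdiff.continuousOn (fun s hs => hκmap s hs))
  have huIcc : Set.uIcc (0:ℝ) 1 = Set.Icc (0:ℝ) 1 := Set.uIcc_of_le zero_le_one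
  -- change of variables
  have hcov : ∫ t in (0:ℝ)..1, h t = L := by
    have hcv := intervalIntegral.integral_comp_smul_deriv'' (f := κ) (f' := κ') (g := G)
      (a := 0) (b := 1) (by rw [huIcc]; exact hκdiff.continuousOn)
      (fun s hs => ?_) (by rw [huIcc]; exact hκ'cont) ?_
    · rw [hκ0, hκ1] at hcv
      simp only [smul_eq_mul, Function.comp] at hcv
      rw [hhdef]
      rw [hcv, hL]
    · have hs' : s ∈ Set.Icc (0:ℝ) 1 := by
        simp only [min_self, ge_iff_le, zero_le_one, min_eq_left, max_eq_right] at hs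
        exact Set.Ioo_subset_Icc_self hs
      have hs'' : s ∈ Set.Ioo (0:ℝ) 1 := by
        simpa [min_eq_left (zero_le_one (α := ℝ)), max_eq_right (zero_le_one (α := ℝ))] using hs
      exact (((hκder s hs').hasDerivAt (Icc_mem_nhds hs''.1 hs''.2)).hasDerivWithinAt)
    · refine hGcont.mono ?_
      rintro y ⟨s, hs, rfl⟩
      rw [huIcc] at hs
      exact hκmap s hs
  -- energy
  have hhint : IntervalIntegrable h volume 0 1 :=
    (by rw [huIcc]; exact hhcont : ContinuousOn h (Set.uIcc 0 1)).intervalIntegrable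
  have hh2int : IntervalIntegrable (fun t => (h t)^2) volume 0 1 :=
    (by rw [huIcc]; exact hhcont.pow 2 : ContinuousOn (fun t => (h t)^2)
      (Set.uIcc 0 1)).intervalIntegrable
  have hE2 : ∫ t in (0:ℝ)..1, (h t)^2 = L^2 := by
    rw [← hE]
    refine intervalIntegral.integral_congr fun t ht => ?_
    rw [huIcc] at ht
    rw [← hsqrtq t ht, Real.sq_sqrt]
    exact Finset.sum_nonneg fun x _ => div_nonneg (sq_nonneg _) (hpos _ (hκmap t ht) x).le
  -- ∫ (h - L)^2 = 0
  have hzero : ∫ t in (0:ℝ)..1, (h t - L)^2 = 0 := by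
    have expand : ∀ t : ℝ, (h t - L)^2 = ((h t)^2 - 2*L*(h t)) + L^2 := fun t => by ring
    simp only [expand]
    rw [intervalIntegral.integral_add (hh2int.sub (hhint.const_mul (2*L)))
        intervalIntegrable_const,
      intervalIntegral.integral_sub hh2int (hhint.const_mul (2*L)),
      intervalIntegral.integral_const_mul, hE2, hcov, intervalIntegral.integral_const]
    simp
    ring
  have hfin := aux_eq_zero (q := fun t => (h t - L)^2)
    ((hhcont.sub continuousOn_const).pow 2) (fun t _ => sq_nonneg _) hzero
  intro t ht
  rw [hsqrtq t ht]
  have := hfin t ht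
  have h0 : h t - L = 0 := by
    have := sq_eq_zero_iff.mp this
    exact this
  linarith
end

section
/- (Closed-form kinetic-optimal scheduler for the mask mixture path) Define κ* : [0,1] → [0,1] by κ*(t) = sin²(π t / 2). Then κ*(0) = 0, κ*(1) = 1, κ* is monotone nondecreasing and differentiable, and for all t ∈ (0,1) it has constant normalized Fisher–Rao speed: (κ*)'(t) / √( κ*(t) · (1 − κ*(t)) ) = π. Consequently its Fisher–Rao energy for the mask mixture path equals π²: ∫₀¹ ((κ*)'(t))² / ( κ*(t) (1 − κ*(t)) ) dt = π². -/
open Real MeasureTheory intervalIntegral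

lemma mask_hder (t : ℝ) : HasDerivAt (fun t : ℝ => Real.sin (Real.pi * t / 2) ^ 2)
    (Real.pi * Real.sin (Real.pi * t / 2) * Real.cos (Real.pi * t / 2)) t := by
  have h1 : HasDerivAt (fun t : ℝ => Real.pi * t / 2) (Real.pi / 2) t := by
    simpa using ((hasDerivAt_id t).const_mul Real.pi).div_const 2
  have h3 := ((Real.hasDerivAt_sin (Real.pi * t / 2)).comp t h1).fun_pow 2
  refine h3.congr_deriv ?_
  simp only [Function.comp_apply]
  ring

lemma mask_deriv_eq (t : ℝ) : deriv (fun t : ℝ => Real.sin (Real.pi * t / 2) ^ 2) t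
    = Real.pi * Real.sin (Real.pi * t / 2) * Real.cos (Real.pi * t / 2) :=
  (mask_hder t).deriv

/-- Closed-form kinetic-optimal scheduler for the mask mixture path:
`κ*(t) = sin²(π t / 2)` satisfies the endpoint conditions, is monotone and
differentiable, has constant normalized Fisher–Rao speed `π` on `(0,1)`, and its
Fisher–Rao energy equals `π²`. -/
theorem mask_mixture_sine_squared_scheduler :
    Real.sin (Real.pi * 0 / 2) ^ 2 = 0
    ∧ Real.sin (Real.pi * 1 / 2) ^ 2 = 1
    ∧ MonotoneOn (fun t : ℝ => Real.sin (Real.pi * t / 2) ^ 2) (Set.Icc 0 1)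
    ∧ Differentiable ℝ (fun t : ℝ => Real.sin (Real.pi * t / 2) ^ 2)
    ∧ (∀ t ∈ Set.Ioo (0 : ℝ) 1,
        deriv (fun t : ℝ => Real.sin (Real.pi * t / 2) ^ 2) t
          / Real.sqrt (Real.sin (Real.pi * t / 2) ^ 2
              * (1 - Real.sin (Real.pi * t / 2) ^ 2)) = Real.pi)
    ∧ ∫ t in (0:ℝ)..1,
        (deriv (fun t : ℝ => Real.sin (Real.pi * t / 2) ^ 2) t) ^ 2
          / (Real.sin (Real.pi * t / 2) ^ 2 * (1 - Real.sin (Real.pi * t / 2) ^ 2))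
        = Real.pi ^ 2 := by
  have hpi := Real.pi_pos
  -- basic bounds for t ∈ [0,1]
  have key : ∀ t : ℝ, 0 < t → t < 1 →
      Real.sin (Real.pi * t / 2) > 0 ∧ Real.cos (Real.pi * t / 2) > 0 := by
    intro t ht0 ht1
    have h1 : 0 < Real.pi * t / 2 := by positivity
    have h2 : Real.pi * t / 2 < Real.pi / 2 := by nlinarith
    exact ⟨Real.sin_pos_of_pos_of_lt_pi h1 (by nlinarith), Real.cos_pos_of_mem_Ioo ⟨by nlinarith, h2⟩⟩
  refine ⟨by simp, by rw [mul_one, Real.sin_pi_div_two]; norm_num, ?_, ?_, ?_, ?_⟩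
  · -- monotone
    intro a ha b hb hab
    have h1 : Real.sin (Real.pi * a / 2) ≤ Real.sin (Real.pi * b / 2) := by
      apply Real.sin_le_sin_of_le_of_le_pi_div_two
      · nlinarith [ha.1]
      · nlinarith [hb.2]
      · nlinarith
    have h2 : 0 ≤ Real.sin (Real.pi * a / 2) :=
      Real.sin_nonneg_of_nonneg_of_le_pi (by nlinarith [ha.1]) (by nlinarith [ha.2, Real.pi_le_four])
    exact pow_le_pow_left₀ h2 h1 2
  · exact fun t => (mask_hder t).differentiableAt
  · intro t ht
    obtain ⟨hs, hc⟩ := key t ht.1 ht.2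
    rw [mask_deriv_eq]
    have : Real.sin (Real.pi * t / 2) ^ 2 * (1 - Real.sin (Real.pi * t / 2) ^ 2)
        = (Real.sin (Real.pi * t / 2) * Real.cos (Real.pi * t / 2)) ^ 2 := by
      have := Real.sin_sq_add_cos_sq (Real.pi * t / 2)
      nlinarith [this]
    rw [this, Real.sqrt_sq (by positivity)]
    field_simp
  · have hconst : ∀ᵐ x : ℝ, x ∈ Set.uIoc (0:ℝ) 1 →
        (deriv (fun t : ℝ => Real.sin (Real.pi * t / 2) ^ 2) x) ^ 2
          / (Real.sin (Real.pi * x / 2) ^ 2 * (1 - Real.sin (Real.pi * x / 2) ^ 2))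
        = Real.pi ^ 2 := by
      have hne1 : ∀ᵐ x : ℝ, x ≠ 1 := ae_iff.mpr (by simp)
      filter_upwards [hne1] with x hx1 hx
      rw [Set.uIoc_of_le (by norm_num : (0:ℝ) ≤ 1)] at hx
      have hlt : x < 1 := lt_of_le_of_ne hx.2 hx1
      obtain ⟨hs, hc⟩ := key x hx.1 hlt
      rw [mask_deriv_eq]
      have h := Real.sin_sq_add_cos_sq (Real.pi * x / 2)
      have h2 : 1 - Real.sin (Real.pi * x / 2) ^ 2 = Real.cos (Real.pi * x / 2) ^ 2 := by
        linarith
      rw [h2]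
      rw [div_eq_iff (by positivity)]
      ring
    rw [intervalIntegral.integral_congr_ae hconst]
    simp
end
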